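/- Let S be a finite rigid semiring. Then the enveloping algebra A_ℚ(S) = A(S) ⊗_ℤ ℚ over the rational numbers is a semisimple ring. (Equivalently: a finite-dimensional associative unital ℚ-algebra possessing a basis (e_s)_{s∈S} whose structure constants are the nonnegative integers m(s,t,u) of a rigid semiring, with unit e_e, is semisimple.) -/

import Mathlib

/-!
STATEMENT 4: Let `S` be a finite rigid semiring.  Then the enveloping algebra
`A_ℚ(S) = A(S) ⊗ ℚ` is a semisimple ring.  Equivalently (as stated here): any
associative unital ℚ-algebra `A` possessing a basis `(b s)_{s ∈ S}` whose
structure constants are the nonnegative integers `m s t u` of a rigid semiring,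
with `b e = 1`, is semisimple.
-/
theorem stmt4 {S : Type*} [Fintype S] [DecidableEq S]
    (m : S → S → S → ℕ) (e : S)
    (hassoc : ∀ x₁ x₂ x₃ x : S,
      ∑ t : S, m x₁ t x * m x₂ x₃ t = ∑ s : S, m x₁ x₂ s * m s x₃ x)
    (hid_right : ∀ s t : S, m s e t = if s = t then 1 else 0)
    (hid_left : ∀ s t : S, m e s t = if s = t then 1 else 0)
    (conj : S → S)
    (hrigid : ∀ s t u : S, m s t u = m (conj s) u t)
    (A : Type*) [Ring A] [Algebra ℚ A]
    (b : Module.Basis S ℚ A)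
    (hb : ∀ i j : S, b i * b j = ∑ u : S, (m i j u : ℚ) • b u)
    (hone : b e = 1) :
    IsSemisimpleRing A := by
  classical
  -- conj is involutive
  have hconj2 : ∀ s, conj (conj s) = s := by
    intro s
    have h1 : m (conj (conj s)) e s = m (conj s) s e := (hrigid (conj s) s e).symm
    have h2 : m s e s = m (conj s) s e := hrigid s e s
    have h3 : m s e s = 1 := by simp [hid_right]
    have h4 : m (conj (conj s)) e s = 1 := by rw [h1, ← h2, h3]
    rw [hid_right] at h4
    by_contra hne
    simp [hne] at h4
  haveI : FiniteDimensional ℚ A := b.finiteDimensional_of_finite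
  -- the standard bilinear form
  set B : LinearMap.BilinForm ℚ A := LinearMap.mk₂ ℚ
      (fun x y => ∑ s : S, b.repr x s * b.repr y s)
      (by intros x x' y; simp [map_add, Finsupp.add_apply, add_mul, Finset.sum_add_distrib])
      (by intros c x y; simp [Finsupp.smul_apply, smul_eq_mul, Finset.mul_sum, mul_assoc])
      (by intros x y y'; simp [map_add, Finsupp.add_apply, mul_add, Finset.sum_add_distrib])
      (by intros c x y; simp [Finsupp.smul_apply, smul_eq_mul, Finset.mul_sum, mul_left_comm])
      with hBdef
  have hBapp : ∀ x y, B x y = ∑ s : S, b.repr x s * b.repr y s := fun x y => rfl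
  have hBr : ∀ (x : A) (u : S), B x (b u) = b.repr x u := by
    intro x u
    rw [hBapp]
    simp [b.repr_self, Finsupp.single_apply, mul_ite]
  have hBl : ∀ (x : A) (t : S), B (b t) x = b.repr x t := by
    intro x t
    rw [hBapp]
    simp [b.repr_self, Finsupp.single_apply, ite_mul]
  have hsym : B.IsSymm := by
    constructor
    intro x y
    rw [hBapp, hBapp]
    exact Finset.sum_congr rfl fun s _ => mul_comm _ _
  -- conjugation operator
  set T : A →ₗ[ℚ] A := b.constr ℚ (fun s => b (conj s)) with hTdef
  have hT : ∀ s, T (b s) = b (conj s) := fun s => b.constr_basis _ _ _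
  have hTT : ∀ x : A, T (T x) = x := by
    have h : T ∘ₗ T = LinearMap.id := b.ext fun s => by
      simp [LinearMap.comp_apply, hT, hconj2]
    intro x
    have := DFunLike.congr_fun h x
    simpa using this
  -- structure constants via repr
  have hrepr_mul : ∀ s t u : S, b.repr (b s * b t) u = (m s t u : ℚ) := by
    intro s t u
    rw [hb]
    simp [b.repr_self, Finsupp.single_apply]
  -- adjoint identity on basis elements
  have hkey : ∀ s t u : S, B (b s * b t) (b u) = B (b t) (b (conj s) * b u) := by
    intro s t u
    rw [hBr, hBl, hrepr_mul, hrepr_mul]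
    exact_mod_cast congrArg Nat.cast (hrigid s t u)
  -- adjoint identity, one basis vector on the left
  have hadj1 : ∀ (s : S) (y z : A), B (b s * y) z = B y (b (conj s) * z) := by
    intro s y z
    rw [← b.sum_repr y, ← b.sum_repr z]
    simp only [Finset.mul_sum, mul_smul_comm, map_sum, map_smul, LinearMap.sum_apply,
      LinearMap.smul_apply, smul_eq_mul]
    refine Finset.sum_congr rfl fun t _ => Finset.sum_congr rfl fun u _ => ?_
    rw [hkey s u t]
  -- full adjoint identity
  have hadj : ∀ x y z : A, B (x * y) z = B y (T x * z) := by
    intro x y z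
    rw [← b.sum_repr x]
    simp only [Finset.sum_mul, smul_mul_assoc, map_sum, map_smul, LinearMap.sum_apply,
      LinearMap.smul_apply, smul_eq_mul, hT]
    refine Finset.sum_congr rfl fun s _ => ?_
    rw [hadj1 s y z]
  -- positive definiteness
  have hpos : ∀ x : A, B x x = 0 → x = 0 := by
    intro x hx
    rw [hBapp] at hx
    have h0 : ∀ s ∈ Finset.univ, b.repr x s * b.repr x s = 0 :=
      (Finset.sum_eq_zero_iff_of_nonneg (fun s _ => mul_self_nonneg _)).mp hx
    have : b.repr x = 0 := Finsupp.ext fun s =>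
      mul_self_eq_zero.mp (h0 s (Finset.mem_univ s))
    exact (LinearEquiv.map_eq_zero_iff b.repr).mp this
  refine (isSemisimpleModule_iff A A).mpr ⟨fun I => ?_⟩
  set W : Submodule ℚ A := I.restrictScalars ℚ with hW
  set Wo : Submodule ℚ A := B.orthogonal W with hWo
  have hWo_mem : ∀ z : A, z ∈ Wo ↔ ∀ y ∈ W, B y z = 0 := by
    intro z
    exact LinearMap.BilinForm.mem_orthogonal_iff
  have hrestr : (B.restrict W).Nondegenerate := by
    constructor
    all_goals
      intro ⟨x, hx⟩ h
      have := h ⟨x, hx⟩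
      simp only [LinearMap.BilinForm.restrict_apply, LinearMap.domRestrict_apply] at this
      exact Subtype.ext (hpos x this)
  have hC : IsCompl W Wo :=
    LinearMap.BilinForm.isCompl_orthogonal_of_restrict_nondegenerate hsym.isRefl hrestr
  refine ⟨{ carrier := Wo
            add_mem' := fun ha hb => Wo.add_mem ha hb
            zero_mem' := Wo.zero_mem
            smul_mem' := ?_ }, ?_, ?_⟩
  · intro a z hz
    have hz' : z ∈ Wo := hz
    show a • z ∈ (Wo : Set A)
    rw [smul_eq_mul]
    refine (hWo_mem _).mpr fun y hy => ?_
    have h1 : B y (a * z) = B (T a * y) z := by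
      rw [hadj (T a) y z, hTT]
    rw [h1]
    have hmem : T a * y ∈ W := by
      have : T a • y ∈ I := I.smul_mem (T a) hy
      simpa [smul_eq_mul, hW] using this
    exact (hWo_mem z).mp hz' _ hmem
  · rw [Submodule.disjoint_def]
    intro x hxI hxJ
    exact (Submodule.disjoint_def.mp hC.disjoint) x hxI hxJ
  · rw [codisjoint_iff, eq_top_iff]
    intro x _
    have hx : x ∈ W ⊔ Wo := by rw [hC.sup_eq_top]; trivial
    obtain ⟨y, hy, z, hz, rfl⟩ := Submodule.mem_sup.mp hx
    exact Submodule.add_mem _ (Submodule.mem_sup_left hy) (Submodule.mem_sup_right hz)
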